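/- Let k be a field and n, n' ≥ 1. Let 𝒱ⁿ denote the product category of n copies of the category of finite-dimensional k-vector spaces, and for i ∈ {1,…,n} let e_i denote the object of 𝒱ⁿ whose i-th component is k and whose other components are the zero vector space. Let H, H' : 𝒱ⁿ → 𝒱^{n'} be k-linear functors (additive functors whose maps on hom-spaces are k-linear). Then H and H' are naturally isomorphic if and only if they have the same matrix of ranks, i.e. if and only if for all i ∈ {1,…,n} and i' ∈ {1,…,n'} the dimension over k of the i'-th component of H(e_i) equals the dimension over k of the i'-th component of H'(e_i). -/

import Mathlib

open CategoryTheory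

universe w v u

/-- Preadditive structure on a product of preadditive categories. -/
instance piPreadditive {I : Type w} {C : I → Type u} [∀ i, Category.{v} (C i)]
    [∀ i, Preadditive (C i)] : Preadditive (∀ i, C i) where
  homGroup X Y := inferInstanceAs (AddCommGroup (∀ i, X i ⟶ Y i))
  add_comp := by intros; funext i; exact Preadditive.add_comp _ _ _ _ _ _
  comp_add := by intros; funext i; exact Preadditive.comp_add _ _ _ _ _ _

/-- `k`-linear structure on a product of `k`-linear categories. -/
instance piLinear (k : Type*) [Semiring k] {I : Type w} {C : I → Type u}
    [∀ i, Category.{v} (C i)] [∀ i, Preadditive (C i)] [∀ i, Linear k (C i)] :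
    Linear k (∀ i, C i) where
  homModule X Y := inferInstanceAs (Module k (∀ i, X i ⟶ Y i))
  smul_comp := by intros; funext i; exact Linear.smul_comp _ _ _ _ _ _
  comp_smul := by intros; funext i; exact Linear.comp_smul _ _ _ _ _ _

/-- The basic object `e_i` of `𝒱ⁿ`: its `i`-th component is `k` and its other
components are the zero vector space. -/
noncomputable def basicObj (k : Type*) [Field k] (n : ℕ) (i : Fin n) :
    Fin n → FGModuleCat k :=
  fun j => if j = i then FGModuleCat.of k k else FGModuleCat.of k PUnit

section helpers
variable {k : Type*} [Field k] {n : ℕ}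

/-- view a linear map as a morphism in `FGModuleCat`. -/
abbrev fgHom {V W : FGModuleCat k} (f : ↑V →ₗ[k] ↑W) : V ⟶ W := ConcreteCategory.ofHom f

lemma basicObj_eq_self (i : Fin n) : basicObj k n i i = FGModuleCat.of k k := by
  simp [basicObj]

lemma basicObj_subsingleton {i j : Fin n} (h : j ≠ i) :
    Subsingleton ↑(basicObj k n i j) := by
  rw [basicObj]
  rw [if_neg h]
  exact inferInstanceAs (Subsingleton PUnit)

/-- morphism `e_i ⟶ X` determined by `x : X i`. -/
noncomputable def uHom (X : Fin n → FGModuleCat k) (i : Fin n) (x : ↑(X i)) :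
    basicObj k n i ⟶ X :=
  fun j =>
    if h : j = i then
      eqToHom (show basicObj k n i j = FGModuleCat.of k k by
          rw [h]; exact basicObj_eq_self i) ≫
        fgHom (LinearMap.toSpanSingleton k (↑(X j)) (h.symm ▸ x))
    else 0

/-- morphism `X ⟶ e_i` determined by a functional `l : X i →ₗ[k] k`. -/
noncomputable def pHom (X : Fin n → FGModuleCat k) (i : Fin n) (l : ↑(X i) →ₗ[k] k) :
    X ⟶ basicObj k n i :=
  fun j =>
    if h : j = i then
      fgHom (V := X j) (W := FGModuleCat.of k k) (h.symm ▸ l) ≫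
        eqToHom (show FGModuleCat.of k k = basicObj k n i j by
          rw [h]; exact (basicObj_eq_self i).symm)
    else 0

lemma uHom_apply_self (X : Fin n → FGModuleCat k) (i : Fin n) (x : ↑(X i)) :
    uHom X i x i = eqToHom (basicObj_eq_self i) ≫
      fgHom (LinearMap.toSpanSingleton k (↑(X i)) x) := by
  simp [uHom]

lemma uHom_apply_ne {X : Fin n → FGModuleCat k} {i j : Fin n} (h : j ≠ i) (x : ↑(X i)) :
    uHom X i x j = 0 := by
  simp [uHom, h]

lemma pHom_apply_self (X : Fin n → FGModuleCat k) (i : Fin n) (l : ↑(X i) →ₗ[k] k) :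
    pHom X i l i = fgHom l ≫ eqToHom (basicObj_eq_self i).symm := by
  simp [pHom]

lemma pHom_apply_ne {X : Fin n → FGModuleCat k} {i j : Fin n} (h : j ≠ i)
    (l : ↑(X i) →ₗ[k] k) : pHom X i l j = 0 := by
  simp [pHom, h]

lemma uHom_comp {X Y : Fin n → FGModuleCat k} (i : Fin n) (x : ↑(X i)) (f : X ⟶ Y) :
    uHom X i x ≫ f = uHom Y i (f i x) := by
  funext j
  show uHom X i x j ≫ f j = uHom Y i (f i x) j
  by_cases h : j = i
  · subst h
    rw [uHom_apply_self, uHom_apply_self, Category.assoc]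
    congr 1
    refine FGModuleCat.hom_ext (LinearMap.ext fun c => ?_)
    show f j (c • x) = c • (f j x)
    simp
  · rw [uHom_apply_ne h, uHom_apply_ne h, Limits.zero_comp]

lemma uHom_comp_pHom_self {X : Fin n → FGModuleCat k} (i : Fin n) (x : ↑(X i))
    (l : ↑(X i) →ₗ[k] k) :
    uHom X i x ≫ pHom X i l = l x • 𝟙 (basicObj k n i) := by
  funext j
  show uHom X i x j ≫ pHom X i l j = l x • 𝟙 (basicObj k n i j)
  by_cases h : j = i
  · subst h
    rw [uHom_apply_self, pHom_apply_self]
    have keyL : (l ∘ₗ LinearMap.toSpanSingleton k (↑(X j)) x : k →ₗ[k] k)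
        = (l x) • LinearMap.id := by
      ext c
      rw [LinearMap.smul_apply]
      simp [mul_comm]
    have key : fgHom (V := FGModuleCat.of k k) (LinearMap.toSpanSingleton k (↑(X j)) x) ≫
        fgHom l = l x • 𝟙 (FGModuleCat.of k k) := FGModuleCat.hom_ext keyL
    slice_lhs 2 3 => rw [key]
    simp
  · haveI := basicObj_subsingleton (k := k) h
    rw [uHom_apply_ne h, Limits.zero_comp]
    apply FGModuleCat.hom_ext
    apply LinearMap.ext
    intro a
    have ha : a = 0 := @Subsingleton.elim _ (basicObj_subsingleton h) a 0
    rw [ha]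
    exact (map_zero _).symm

lemma uHom_comp_pHom_ne {X : Fin n → FGModuleCat k} {i i' : Fin n} (h : i ≠ i')
    (x : ↑(X i)) (l : ↑(X i') →ₗ[k] k) :
    uHom X i x ≫ pHom X i' l = (0 : basicObj k n i ⟶ basicObj k n i') := by
  funext j
  show uHom X i x j ≫ pHom X i' l j = 0
  by_cases hj : j = i'
  · subst hj
    rw [uHom_apply_ne (Ne.symm h), Limits.zero_comp]
  · rw [pHom_apply_ne hj, Limits.comp_zero]

end helpers

section sums
variable {k : Type*} [Field k] {n : ℕ}

lemma hom_sum_apply {X Y : Fin n → FGModuleCat k} {ι : Type*} (s : Finset ι)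
    (f : ι → (X ⟶ Y)) (m : Fin n) : (∑ p ∈ s, f p) m = ∑ p ∈ s, f p m := by
  classical
  induction s using Finset.induction_on with
  | empty => rfl
  | insert _ _ hp ih =>
      rw [Finset.sum_insert hp, Finset.sum_insert hp, ← ih]
      rfl

lemma fg_sum_apply {V W : FGModuleCat k} {ι : Type*} (s : Finset ι)
    (f : ι → (V ⟶ W)) (x : ↑V) : (∑ i ∈ s, f i) x = ∑ i ∈ s, f i x := by
  classical
  induction s using Finset.induction_on with
  | empty => rfl
  | insert _ _ hp ih =>
      rw [Finset.sum_insert hp, Finset.sum_insert hp, ← ih]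
      rfl

/-- the index type for the resolution of `X` by basic objects. -/
abbrev resIndex (k : Type*) [Field k] {n : ℕ} (X : Fin n → FGModuleCat k) : Type _ :=
  Σ i : Fin n, Fin (Module.finrank k ↑(X i))

noncomputable def resBasis (k : Type*) [Field k] {n : ℕ} (X : Fin n → FGModuleCat k)
    (i : Fin n) : Module.Basis (Fin (Module.finrank k ↑(X i))) k ↑(X i) :=
  Module.finBasis k ↑(X i)

/-- the `p`-th projection of the resolution. -/
noncomputable def resP {X : Fin n → FGModuleCat k} (p : resIndex k X) :
    X ⟶ basicObj k n p.1 :=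
  pHom X p.1 ((resBasis k X p.1).coord p.2)

/-- the `p`-th injection of the resolution. -/
noncomputable def resU {X : Fin n → FGModuleCat k} (p : resIndex k X) :
    basicObj k n p.1 ⟶ X :=
  uHom X p.1 (resBasis k X p.1 p.2)

lemma sum_resP_resU (X : Fin n → FGModuleCat k) :
    ∑ p : resIndex k X, resP p ≫ resU p = 𝟙 X := by
  classical
  funext m
  rw [hom_sum_apply]
  show _ = 𝟙 (X m)
  rw [← Finset.univ_sigma_univ, Finset.sum_sigma]
  rw [Finset.sum_eq_single m (fun i _ hne => ?_) (fun h => absurd (Finset.mem_univ m) h)]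
  · have key : ∀ b, (resP (X := X) ⟨m, b⟩ ≫ resU (X := X) ⟨m, b⟩) m
        = fgHom ((LinearMap.toSpanSingleton k (↑(X m)) (resBasis k X m b)) ∘ₗ
            ((resBasis k X m).coord b)) := by
      intro b
      show pHom X m _ m ≫ uHom X m _ m = _
      rw [pHom_apply_self, uHom_apply_self, Category.assoc, eqToHom_trans_assoc,
        eqToHom_refl, Category.id_comp]
      rfl
    rw [Finset.sum_congr rfl (fun b _ => key b)]
    have L : (∑ b : Fin (Module.finrank k ↑(X m)),
        (LinearMap.toSpanSingleton k (↑(X m)) (resBasis k X m b)) ∘ₗ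
          ((resBasis k X m).coord b))
        = (LinearMap.id : ↑(X m) →ₗ[k] ↑(X m)) := by
      apply LinearMap.ext
      intro x
      rw [LinearMap.sum_apply]
      simp only [LinearMap.coe_comp, Function.comp_apply, Module.Basis.coord_apply,
        LinearMap.toSpanSingleton_apply, LinearMap.id_apply]
      exact Module.Basis.sum_repr _ x
    refine FGModuleCat.hom_ext (LinearMap.ext fun x => ?_)
    refine (fg_sum_apply _ _ x).trans ?_
    refine Eq.trans ?_ (LinearMap.congr_fun L x)
    rw [LinearMap.sum_apply]
    rfl
  · apply Finset.sum_eq_zero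
    intro b _
    show pHom X i _ m ≫ uHom X i _ m = 0
    rw [pHom_apply_ne (Ne.symm hne), Limits.zero_comp]

end sums

section main
variable {k : Type*} [Field k] {n n' : ℕ}
variable (H H' : (Fin n → FGModuleCat k) ⥤ (Fin n' → FGModuleCat k))
variable [H.Additive] [H'.Additive] [H.Linear k] [H'.Linear k]

/-- the candidate natural transformation associated to a family of maps on basic objects. -/
noncomputable def transHom (φ : ∀ i : Fin n, H.obj (basicObj k n i) ⟶ H'.obj (basicObj k n i))
    (X : Fin n → FGModuleCat k) : H.obj X ⟶ H'.obj X :=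
  ∑ p : resIndex k X, H.map (resP p) ≫ φ p.1 ≫ H'.map (resU p)

/-- the swap lemma: `φ` commutes with images of morphisms between basic objects. -/
lemma transHom_swap (φ : ∀ i : Fin n, H.obj (basicObj k n i) ⟶ H'.obj (basicObj k n i))
    {Y : Fin n → FGModuleCat k} (i : Fin n) (y : ↑(Y i)) (q : resIndex k Y) :
    φ i ≫ H'.map (uHom Y i y ≫ resP q) = H.map (uHom Y i y ≫ resP q) ≫ φ q.1 := by
  obtain ⟨j, b⟩ := q
  by_cases h : i = j
  · subst h
    rw [show uHom Y i y ≫ resP ⟨i, b⟩ = ((resBasis k Y i).coord b y) • 𝟙 (basicObj k n i) from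
      uHom_comp_pHom_self i y _]
    rw [H.map_smul, H'.map_smul, CategoryTheory.Functor.map_id, CategoryTheory.Functor.map_id,
      Linear.comp_smul, Linear.smul_comp, Category.comp_id, Category.id_comp]
  · rw [show uHom Y i y ≫ resP ⟨j, b⟩ = 0 from uHom_comp_pHom_ne h y _]
    rw [H.map_zero, H'.map_zero, Limits.comp_zero, Limits.zero_comp]

lemma transHom_naturality
    (φ : ∀ i : Fin n, H.obj (basicObj k n i) ⟶ H'.obj (basicObj k n i))
    {X Y : Fin n → FGModuleCat k} (f : X ⟶ Y) :
    H.map f ≫ transHom H H' φ Y = transHom H H' φ X ≫ H'.map f := by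
  classical
  rw [transHom, transHom, Preadditive.comp_sum, Preadditive.sum_comp]
  -- rewrite the right side into a double sum
  have rhs : ∀ p : resIndex k X,
      (H.map (resP p) ≫ φ p.1 ≫ H'.map (resU p)) ≫ H'.map f
        = ∑ q : resIndex k Y, H.map (resP p) ≫ H.map ((resU p ≫ f) ≫ resP q) ≫ φ q.1 ≫
            H'.map (resU q) := by
    intro p
    have expand : resU p ≫ f = ∑ q : resIndex k Y, ((resU p ≫ f) ≫ resP q) ≫ resU q := by
      conv_lhs => rw [← Category.comp_id (resU p ≫ f), ← sum_resP_resU Y,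
        Preadditive.comp_sum]
      exact Finset.sum_congr rfl fun q _ => rfl
    calc (H.map (resP p) ≫ φ p.1 ≫ H'.map (resU p)) ≫ H'.map f
        = H.map (resP p) ≫ φ p.1 ≫ H'.map (resU p ≫ f) := by
          rw [H'.map_comp, Category.assoc, Category.assoc]
      _ = ∑ q : resIndex k Y, H.map (resP p) ≫ φ p.1 ≫
            H'.map ((resU p ≫ f) ≫ resP q) ≫ H'.map (resU q) := by
          conv_lhs => rw [expand, H'.map_sum, Preadditive.comp_sum, Preadditive.comp_sum]
          exact Finset.sum_congr rfl fun q _ => by rw [H'.map_comp]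
      _ = ∑ q : resIndex k Y, H.map (resP p) ≫ H.map ((resU p ≫ f) ≫ resP q) ≫ φ q.1 ≫
            H'.map (resU q) := by
          refine Finset.sum_congr rfl fun q _ => ?_
          have hs := transHom_swap H H' φ p.1 (f p.1 (resBasis k X p.1 p.2)) q
          rw [show (resU p ≫ f) ≫ resP q = uHom Y p.1 (f p.1 (resBasis k X p.1 p.2)) ≫ resP q
            from by rw [resU, uHom_comp]]
          rw [← Category.assoc (φ p.1), hs, Category.assoc]
  have lhs : ∀ q : resIndex k Y,
      H.map f ≫ H.map (resP q) ≫ φ q.1 ≫ H'.map (resU q)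
        = ∑ p : resIndex k X, H.map (resP p) ≫ H.map ((resU p ≫ f) ≫ resP q) ≫ φ q.1 ≫
            H'.map (resU q) := by
    intro q
    have expand : f ≫ resP q = ∑ p : resIndex k X, resP p ≫ ((resU p ≫ f) ≫ resP q) := by
      conv_lhs => rw [← Category.id_comp (f ≫ resP q), ← sum_resP_resU X,
        Preadditive.sum_comp]
      exact Finset.sum_congr rfl fun p _ => rfl
    rw [← Category.assoc, ← H.map_comp, expand, H.map_sum, Preadditive.sum_comp]
    exact Finset.sum_congr rfl fun p _ => by rw [H.map_comp, Category.assoc]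
  calc ∑ q : resIndex k Y, H.map f ≫ H.map (resP q) ≫ φ q.1 ≫ H'.map (resU q)
      = ∑ q : resIndex k Y, ∑ p : resIndex k X, H.map (resP p) ≫
          H.map ((resU p ≫ f) ≫ resP q) ≫ φ q.1 ≫ H'.map (resU q) :=
        Finset.sum_congr rfl fun q _ => lhs q
    _ = ∑ p : resIndex k X, ∑ q : resIndex k Y, H.map (resP p) ≫
          H.map ((resU p ≫ f) ≫ resP q) ≫ φ q.1 ≫ H'.map (resU q) := Finset.sum_comm
    _ = ∑ p : resIndex k X, (H.map (resP p) ≫ φ p.1 ≫ H'.map (resU p)) ≫ H'.map f :=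
        Finset.sum_congr rfl fun p _ => (rhs p).symm

lemma resU_comp_resP (X : Fin n → FGModuleCat k) (p1 : Fin n)
    (p2 b : Fin (Module.finrank k ↑(X p1))) :
    resU (X := X) ⟨p1, p2⟩ ≫ resP (X := X) ⟨p1, b⟩
      = (if p2 = b then (1 : k) else 0) • 𝟙 (basicObj k n p1) := by
  rw [resU, resP, uHom_comp_pHom_self]
  congr 1
  rw [Module.Basis.coord_apply, Module.Basis.repr_self_apply]

lemma transHom_comp (φ : ∀ i : Fin n, H.obj (basicObj k n i) ⟶ H'.obj (basicObj k n i))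
    (ψ : ∀ i : Fin n, H'.obj (basicObj k n i) ⟶ H.obj (basicObj k n i))
    (hφψ : ∀ i, φ i ≫ ψ i = 𝟙 _) (X : Fin n → FGModuleCat k) :
    transHom H H' φ X ≫ transHom H' H ψ X = 𝟙 (H.obj X) := by
  classical
  rw [transHom, transHom, Preadditive.sum_comp]
  have term : ∀ p : resIndex k X,
      (H.map (resP p) ≫ φ p.1 ≫ H'.map (resU p)) ≫
        ∑ q : resIndex k X, H'.map (resP q) ≫ ψ q.1 ≫ H.map (resU q)
        = H.map (resP p ≫ resU p) := by
    intro p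
    rw [Preadditive.comp_sum]
    rw [Finset.sum_eq_single p (fun q _ hq => ?_) (fun h => absurd (Finset.mem_univ p) h)]
    · simp only [Category.assoc]
      rw [← Category.assoc (H'.map (resU p)) (H'.map (resP p)), ← H'.map_comp]
      obtain ⟨p1, p2⟩ := p
      rw [resU_comp_resP, if_pos rfl, one_smul, CategoryTheory.Functor.map_id,
        Category.id_comp, ← Category.assoc (φ p1), hφψ, Category.id_comp, ← H.map_comp]
    · by_cases h1 : p.1 = q.1
      · obtain ⟨p1, p2⟩ := p
        obtain ⟨q1, q2⟩ := q
        dsimp only at h1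
        subst h1
        have h2 : p2 ≠ q2 := by
          intro e
          exact hq (by cases e; rfl)
        simp only [Category.assoc]
        rw [← Category.assoc (H'.map (resU ⟨p1, p2⟩)) (H'.map (resP ⟨p1, q2⟩)), ← H'.map_comp,
          resU_comp_resP, if_neg h2, zero_smul, H'.map_zero, Limits.zero_comp,
          Limits.comp_zero, Limits.comp_zero]
      · simp only [Category.assoc]
        rw [← Category.assoc (H'.map (resU p)) (H'.map (resP q)), ← H'.map_comp,
          show resU p ≫ resP q = 0 from uHom_comp_pHom_ne h1 _ _,
          H'.map_zero, Limits.zero_comp, Limits.comp_zero, Limits.comp_zero]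
  rw [Finset.sum_congr rfl fun p _ => term p, ← Functor.map_sum, sum_resP_resU,
    CategoryTheory.Functor.map_id]

end main

/-- two `k`-linear functors `𝒱ⁿ → 𝒱^{n'}` are naturally isomorphic iff
they have the same matrix of ranks, i.e. iff for all `i`, `i'` the `i'`-th component of
`H(e_i)` and of `H'(e_i)` have equal dimension over `k`. -/
theorem linear_functor_iso_iff_same_matrix_of_ranks
    {k : Type*} [Field k] (n n' : ℕ) (hn : 1 ≤ n) (hn' : 1 ≤ n')
    (H H' : (Fin n → FGModuleCat k) ⥤ (Fin n' → FGModuleCat k))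
    [H.Additive] [H'.Additive] [H.Linear k] [H'.Linear k] :
    Nonempty (H ≅ H') ↔
      ∀ (i : Fin n) (i' : Fin n'),
        Module.finrank k (H.obj (basicObj k n i) i')
          = Module.finrank k (H'.obj (basicObj k n i) i') := by
  constructor
  · rintro ⟨η⟩ i i'
    set b := basicObj k n i
    have h1 : η.hom.app b i' ≫ η.inv.app b i' = 𝟙 (H.obj b i') :=
      congrFun (η.hom_inv_id_app b) i'
    have h2 : η.inv.app b i' ≫ η.hom.app b i' = 𝟙 (H'.obj b i') :=
      congrFun (η.inv_hom_id_app b) i'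
    have e : ↑(H.obj b i') ≃ₗ[k] ↑(H'.obj b i') :=
      LinearEquiv.ofLinear (η.hom.app b i').hom.hom (η.inv.app b i').hom.hom
        (congrArg (fun f => f.hom.hom) h2) (congrArg (fun f => f.hom.hom) h1)
    exact e.finrank_eq
  · intro hr
    have eqv : ∀ (i : Fin n) (i' : Fin n'),
        ↑(H.obj (basicObj k n i) i') ≃ₗ[k] ↑(H'.obj (basicObj k n i) i') :=
      fun i i' => LinearEquiv.ofFinrankEq _ _ (hr i i')
    let φ : ∀ i : Fin n, H.obj (basicObj k n i) ⟶ H'.obj (basicObj k n i) :=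
      fun i => fun i' => fgHom (eqv i i').toLinearMap
    let ψ : ∀ i : Fin n, H'.obj (basicObj k n i) ⟶ H.obj (basicObj k n i) :=
      fun i => fun i' => fgHom (eqv i i').symm.toLinearMap
    have hφψ : ∀ i, φ i ≫ ψ i = 𝟙 _ := by
      intro i
      funext i'
      show φ i i' ≫ ψ i i' = 𝟙 (H.obj (basicObj k n i) i')
      apply FGModuleCat.hom_ext
      apply LinearMap.ext
      intro x
      exact (eqv i i').symm_apply_apply x
    have hψφ : ∀ i, ψ i ≫ φ i = 𝟙 _ := by
      intro i
      funext i'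
      show ψ i i' ≫ φ i i' = 𝟙 (H'.obj (basicObj k n i) i')
      apply FGModuleCat.hom_ext
      apply LinearMap.ext
      intro x
      exact (eqv i i').apply_symm_apply x
    exact ⟨{
      hom := { app := transHom H H' φ,
               naturality := fun X Y f => transHom_naturality H H' φ f }
      inv := { app := transHom H' H ψ,
               naturality := fun X Y f => transHom_naturality H' H ψ f }
      hom_inv_id := by
        apply NatTrans.ext
        funext X
        exact transHom_comp H H' φ ψ hφψ X
      inv_hom_id := by
        apply NatTrans.ext
        funext X
        exact transHom_comp H' H ψ φ hψφ X }⟩
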